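/- Let ζ ∈ E satisfy (α, ζ) > 0 for every positive root α ∈ Φ⁺. Let ν ∈ E be such that ν+ρ is regular, let w ∈ W be the unique element such that w(ν+ρ) is dominant, let α, β ∈ Φ⁺ be orthogonal positive roots ((α,β) = 0) with ⟨ν+ρ, α∨⟩ = ⟨ν+ρ, β∨⟩, and let γ ∈ E and c be a positive integer with c·γ = α + β. Then (w(γ), ζ) > 0 if and only if (ν+ρ, γ) > 0. -/
import Mathlib


open scoped RealInnerProductSpace

/-- The reflection `s_α(x) = x - ⟨x, α∨⟩ α` attached to a root `α`, where
`⟨x, α∨⟩ = 2(x,α)/(α,α)`. -/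
noncomputable def sRefl {E : Type*} [NormedAddCommGroup E] [InnerProductSpace ℝ E]
    (α x : E) : E :=
  x - (2 * ⟪x, α⟫ / ⟪α, α⟫) • α

/-- The Weyl group of `Φ`, as the subgroup of linear automorphisms of `E` generated by
the reflections `s_α`, `α ∈ Φ`. -/
def weylGroup {E : Type*} [NormedAddCommGroup E] [InnerProductSpace ℝ E]
    (Φ : Finset E) : Subgroup (E ≃ₗ[ℝ] E) :=
  Subgroup.closure {g : E ≃ₗ[ℝ] E | ∃ α ∈ Φ, ∀ x, g x = sRefl α x}

lemma sRefl_inner {E : Type*} [NormedAddCommGroup E] [InnerProductSpace ℝ E] (α : E) (hα : ⟪α, α⟫ ≠ 0) (x y : E) :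
    ⟪sRefl α x, sRefl α y⟫ = ⟪x, y⟫ := by
  unfold sRefl
  simp only [inner_sub_left, inner_sub_right, real_inner_smul_left, real_inner_smul_right]
  rw [real_inner_comm y α]
  field_simp
  ring

lemma sRefl_sRefl {E : Type*} [NormedAddCommGroup E] [InnerProductSpace ℝ E] (α : E) (hα : ⟪α, α⟫ ≠ 0) (x : E) :
    sRefl α (sRefl α x) = x := by
  unfold sRefl
  rw [inner_sub_left, real_inner_smul_left]
  rw [show 2 * (⟪x, α⟫ - 2 * ⟪x, α⟫ / ⟪α, α⟫ * ⟪α, α⟫) / ⟪α, α⟫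
      = -(2 * ⟪x, α⟫ / ⟪α, α⟫) by field_simp; ring]
  module

lemma weyl_props {E : Type*} [NormedAddCommGroup E] [InnerProductSpace ℝ E] (Φ : Finset E) (hΦ0 : (0 : E) ∉ Φ)
    (hΦrefl : ∀ α ∈ Φ, ∀ β ∈ Φ, sRefl α β ∈ Φ)
    (g : E ≃ₗ[ℝ] E) (hg : g ∈ weylGroup Φ) :
    (∀ x y, ⟪g x, g y⟫ = ⟪x, y⟫) ∧ (∀ δ ∈ Φ, g δ ∈ Φ) := by
  have key : ∀ α ∈ Φ, ⟪α, α⟫ ≠ (0 : ℝ) := by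
    intro α hαΦ
    have : α ≠ 0 := fun h => hΦ0 (h ▸ hαΦ)
    exact inner_self_ne_zero.mpr this
  have main : (∀ x y, ⟪g x, g y⟫ = ⟪x, y⟫) ∧ (∀ δ ∈ Φ, g δ ∈ Φ)
      ∧ (∀ δ ∈ Φ, g⁻¹ δ ∈ Φ) := by
    refine Subgroup.closure_induction ?_ ?_ ?_ ?_ hg
    · rintro x ⟨α, hαΦ, hx⟩
      have hx' : x⁻¹ = x := by
        ext y
        have : x (x y) = y := by rw [hx, hx, sRefl_sRefl α (key α hαΦ)]
        calc x⁻¹ y = x⁻¹ (x (x y)) := by rw [this]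
        _ = x y := x.symm_apply_apply _
      refine ⟨fun a b => by rw [hx, hx, sRefl_inner α (key α hαΦ)],
        fun δ hδ => by rw [hx]; exact hΦrefl α hαΦ δ hδ,
        fun δ hδ => by rw [hx']; rw [hx]; exact hΦrefl α hαΦ δ hδ⟩
    · exact ⟨fun a b => rfl, fun δ hδ => hδ, fun δ hδ => hδ⟩
    · rintro a b _ _ ⟨ha1, ha2, ha3⟩ ⟨hb1, hb2, hb3⟩
      refine ⟨fun x y => by
          show ⟪a (b x), a (b y)⟫ = _
          rw [ha1, hb1],
        fun δ hδ => ha2 _ (hb2 δ hδ),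
        fun δ hδ => by
          rw [mul_inv_rev]
          exact hb3 _ (ha3 δ hδ)⟩
    · rintro a _ ⟨ha1, ha2, ha3⟩
      refine ⟨fun x y => ?_, fun δ hδ => ha3 δ hδ, fun δ hδ => by rw [inv_inv]; exact ha2 δ hδ⟩
      have := ha1 (a⁻¹ x) (a⁻¹ y)
      have hx : a (a⁻¹ x) = x := a.apply_symm_apply x
      have hy : a (a⁻¹ y) = y := a.apply_symm_apply y
      rw [show (a : E ≃ₗ[ℝ] E) (a⁻¹ x) = x from hx, show (a : E ≃ₗ[ℝ] E) (a⁻¹ y) = y from hy] at this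
      rw [← this]
  exact ⟨main.1, main.2.1⟩


/-- Let `ζ` pair positively with every positive root, let `ν+ρ` be regular, let `w` be
the Weyl group element making `w(ν+ρ)` dominant, let `α, β` be orthogonal positive
roots with `⟨ν+ρ, α∨⟩ = ⟨ν+ρ, β∨⟩` and let `γ` satisfy `c·γ = α + β` for a positive
integer `c`.  Then `(w(γ), ζ) > 0` if and only if `(ν+ρ, γ) > 0`. -/
theorem weyl_apply_inner_pos_iff
    {E : Type*} [NormedAddCommGroup E] [InnerProductSpace ℝ E] [FiniteDimensional ℝ E]
    (Φ Φpos : Finset E)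
    -- `Φ` is a finite reduced root system:
    (hΦ0 : (0 : E) ∉ Φ)
    (hΦneg : ∀ α ∈ Φ, -α ∈ Φ)
    (hΦrefl : ∀ α ∈ Φ, ∀ β ∈ Φ, sRefl α β ∈ Φ)
    (hΦred : ∀ α ∈ Φ, ∀ t : ℝ, t • α ∈ Φ → t = 1 ∨ t = -1)
    (hΦint : ∀ α ∈ Φ, ∀ β ∈ Φ, ∃ n : ℤ, 2 * ⟪β, α⟫ / ⟪α, α⟫ = (n : ℝ))
    -- `Φpos` is a system of positive roots:
    (hposΦ : Φpos ⊆ Φ)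
    (hpos : ∀ α ∈ Φ, (α ∈ Φpos ↔ -α ∉ Φpos))
    (hposadd : ∀ α ∈ Φpos, ∀ β ∈ Φpos, α + β ∈ Φ → α + β ∈ Φpos)
    -- `ρ` is the half-sum of the positive roots:
    (ρ : E) (hρ : ρ = (2 : ℝ)⁻¹ • ∑ α ∈ Φpos, α)
    -- `ζ` pairs positively with every positive root:
    (ζ : E) (hζ : ∀ α ∈ Φpos, 0 < ⟪α, ζ⟫)
    -- `ν+ρ` is regular:
    (ν : E) (hreg : ∀ α ∈ Φ, ⟪ν + ρ, α⟫ ≠ 0)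
    -- `w` is the (unique) Weyl group element such that `w(ν+ρ)` is dominant:
    (w : E ≃ₗ[ℝ] E) (hwW : w ∈ weylGroup Φ)
    (hwdom : ∀ α ∈ Φpos, 0 ≤ ⟪w (ν + ρ), α⟫)
    -- `α, β` are orthogonal positive roots with `⟨ν+ρ, α∨⟩ = ⟨ν+ρ, β∨⟩`:
    (α β : E) (hα : α ∈ Φpos) (hβ : β ∈ Φpos) (horth : ⟪α, β⟫ = 0)
    (hpair : 2 * ⟪ν + ρ, α⟫ / ⟪α, α⟫ = 2 * ⟪ν + ρ, β⟫ / ⟪β, β⟫)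
    -- `γ` satisfies `c·γ = α + β` for a positive integer `c`:
    (γ : E) (c : ℕ) (hc : 0 < c) (hγ : (c : ℝ) • γ = α + β) :
    0 < ⟪w γ, ζ⟫ ↔ 0 < ⟪ν + ρ, γ⟫ := by
  obtain ⟨hinner, hmap⟩ := weyl_props Φ hΦ0 hΦrefl w hwW
  set μ := ν + ρ with hμ
  have hαΦ : α ∈ Φ := hposΦ hα
  have hβΦ : β ∈ Φ := hposΦ hβ
  have hA : 0 < ⟪α, α⟫ := lt_of_le_of_ne real_inner_self_nonneg (Ne.symm (inner_self_ne_zero.mpr (fun h => hΦ0 (h ▸ hαΦ))))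
  have hB : 0 < ⟪β, β⟫ := lt_of_le_of_ne real_inner_self_nonneg (Ne.symm (inner_self_ne_zero.mpr (fun h => hΦ0 (h ▸ hβΦ))))
  have ha : ⟪μ, α⟫ ≠ 0 := hreg α hαΦ
  have hcross : 2 * ⟪μ, α⟫ * ⟪β, β⟫ = 2 * ⟪μ, β⟫ * ⟪α, α⟫ :=
    (div_eq_div_iff hA.ne' hB.ne').mp hpair
  have hcpos : (0 : ℝ) < c := Nat.cast_pos.mpr hc
  have hsum1 : (c : ℝ) * ⟪μ, γ⟫ = ⟪μ, α⟫ + ⟪μ, β⟫ := by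
    calc (c : ℝ) * ⟪μ, γ⟫ = ⟪μ, (c : ℝ) • γ⟫ := (real_inner_smul_right μ γ _).symm
    _ = ⟪μ, α⟫ + ⟪μ, β⟫ := by rw [hγ, inner_add_right]
  have hsum2 : (c : ℝ) * ⟪w γ, ζ⟫ = ⟪w α, ζ⟫ + ⟪w β, ζ⟫ := by
    have h1 : (c : ℝ) • w γ = w α + w β := by rw [← map_smul, hγ, map_add]
    calc (c : ℝ) * ⟪w γ, ζ⟫ = ⟪(c : ℝ) • w γ, ζ⟫ := (real_inner_smul_left _ _ _).symm
    _ = ⟪w α, ζ⟫ + ⟪w β, ζ⟫ := by rw [h1, inner_add_left]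
  have hwa : ⟪w μ, w α⟫ = ⟪μ, α⟫ := hinner μ α
  have hwb : ⟪w μ, w β⟫ = ⟪μ, β⟫ := hinner μ β
  rcases lt_or_gt_of_ne ha with haneg | hapos
  · -- both sides false
    have hbneg : ⟪μ, β⟫ < 0 := by nlinarith
    have hwαneg : -w α ∈ Φpos := by
      by_contra h
      have hin : w α ∈ Φpos := (hpos (w α) (hmap α hαΦ)).mpr h
      have := hwdom (w α) hin
      rw [hwa] at this; linarith
    have hwβneg : -w β ∈ Φpos := by
      by_contra h
      have hin : w β ∈ Φpos := (hpos (w β) (hmap β hβΦ)).mpr h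
      have := hwdom (w β) hin
      rw [hwb] at this; linarith
    have h1 : ⟪w α, ζ⟫ < 0 := by
      have := hζ _ hwαneg; rw [inner_neg_left] at this; linarith
    have h2 : ⟪w β, ζ⟫ < 0 := by
      have := hζ _ hwβneg; rw [inner_neg_left] at this; linarith
    constructor
    · intro h; nlinarith
    · intro h; nlinarith
  · -- both sides true
    have hbpos : 0 < ⟪μ, β⟫ := by nlinarith
    have hwαpos : w α ∈ Φpos := by
      by_contra h
      have hin : -w α ∈ Φpos := not_not.mp (fun h2 => h ((hpos (w α) (hmap α hαΦ)).mpr h2))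
      have := hwdom _ hin
      rw [inner_neg_right, hwa] at this; linarith
    have hwβpos : w β ∈ Φpos := by
      by_contra h
      have hin : -w β ∈ Φpos := not_not.mp (fun h2 => h ((hpos (w β) (hmap β hβΦ)).mpr h2))
      have := hwdom _ hin
      rw [inner_neg_right, hwb] at this; linarith
    have h1 : 0 < ⟪w α, ζ⟫ := hζ _ hwαpos
    have h2 : 0 < ⟪w β, ζ⟫ := hζ _ hwβpos
    constructor
    · intro _; nlinarith
    · intro _; nlinarith
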